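/- Let u = i (the imaginary unit), so ω = -u - u^{-1} = 0. Let x, M lie in a commutative ℂ-algebra with x invertible, set F = x·M·(1 - M), c_j = (u^j - u - 1 + u^{1-j})/(u-1), and B_j = (u^j - u^{-j})M - (u^{j-1} - u^{1-j})x + c_j for j = 0,1,2,3. Then B_0 · B_1 · B_2 · B_3 = 16(1 - x)·F. -/
import Mathlib


/-- The case `u = i` (`ω = 0`, `u⁴ = 1`) of the invariant construction: with
`F = xM(1-M)`, `c_j = (u^j - u - 1 + u^{1-j})/(u-1)` and
`B_j = (u^j - u^{-j})M - (u^{j-1} - u^{1-j})x + c_j` for `j = 0,1,2,3`, in a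
commutative ℂ-algebra with `x` invertible, one has `B₀B₁B₂B₃ = 16(1-x)F`. -/
theorem B_product_omega_zero {A : Type} [CommRing A] [Algebra ℂ A]
    (x M : A) (hx : IsUnit x) :
    let u : ℂ := Complex.I
    let c : ℤ → ℂ := fun j => (u ^ j - u - 1 + u ^ (1 - j)) / (u - 1)
    let B : ℤ → A := fun j => algebraMap ℂ A (u ^ j - u ^ (-j)) * M -
      algebraMap ℂ A (u ^ (j - 1) - u ^ (1 - j)) * x + algebraMap ℂ A (c j)
    let F : A := x * M * (1 - M)
    B 0 * B 1 * B 2 * B 3 = 16 * (1 - x) * F := by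
  intro u c B F
  set I := Complex.I with hIdef
  have hne : (I : ℂ) - 1 ≠ 0 := by simp [hIdef, Complex.ext_iff]
  have hz2 : I ^ (2:ℤ) = -1 := by
    rw [show (2:ℤ) = ((2:ℕ):ℤ) from rfl, zpow_natCast, hIdef, Complex.I_sq]
  have hz3 : I ^ (3:ℤ) = -I := by
    rw [show (3:ℤ) = ((3:ℕ):ℤ) from rfl, zpow_natCast, pow_succ, hIdef, Complex.I_sq]
    ring
  -- the scalar coefficients
  have m00 : (I ^ (0:ℤ) - I ^ (-(0:ℤ))) = 0 := by norm_num
  have m01 : (I ^ ((0:ℤ) - 1) - I ^ (1 - (0:ℤ))) = -(2 * I) := by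
    norm_num [zpow_neg, hIdef, Complex.inv_I]; ring
  have m10 : (I ^ (1:ℤ) - I ^ (-(1:ℤ))) = 2 * I := by
    norm_num [zpow_neg, hIdef, Complex.inv_I]; ring
  have m11 : (I ^ ((1:ℤ) - 1) - I ^ (1 - (1:ℤ))) = 0 := by norm_num
  have m20 : (I ^ (2:ℤ) - I ^ (-(2:ℤ))) = 0 := by rw [zpow_neg, hz2]; norm_num
  have m21 : (I ^ ((2:ℤ) - 1) - I ^ (1 - (2:ℤ))) = 2 * I := by
    norm_num [zpow_neg, hIdef, Complex.inv_I]; ring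
  have m30 : (I ^ (3:ℤ) - I ^ (-(3:ℤ))) = -(2 * I) := by
    rw [zpow_neg, hz3, inv_neg, hIdef, Complex.inv_I]; ring
  have m31 : (I ^ ((3:ℤ) - 1) - I ^ (1 - (3:ℤ))) = 0 := by
    norm_num [zpow_neg, hz2]
  have hc0 : c 0 = 0 := by
    show (I ^ (0:ℤ) - I - 1 + I ^ (1 - (0:ℤ))) / (I - 1) = 0
    rw [div_eq_iff hne]; norm_num
  have hc1 : c 1 = 0 := by
    show (I ^ (1:ℤ) - I - 1 + I ^ (1 - (1:ℤ))) / (I - 1) = 0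
    rw [div_eq_iff hne]; norm_num
  have hc2 : c 2 = 2 * I := by
    show (I ^ (2:ℤ) - I - 1 + I ^ (1 - (2:ℤ))) / (I - 1) = 2 * I
    rw [div_eq_iff hne]
    norm_num [zpow_neg, hz2, hIdef, Complex.inv_I]
    linear_combination (-2 : ℂ) * Complex.I_sq
  have hc3 : c 3 = 2 * I := by
    show (I ^ (3:ℤ) - I - 1 + I ^ (1 - (3:ℤ))) / (I - 1) = 2 * I
    rw [div_eq_iff hne]
    norm_num [zpow_neg, hz3, hz2]
    linear_combination (-2 : ℂ) * Complex.I_sq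
  -- values of the B's
  have hB0 : B 0 = algebraMap ℂ A (2 * I) * x := by
    show algebraMap ℂ A (I ^ (0:ℤ) - I ^ (-(0:ℤ))) * M -
        algebraMap ℂ A (I ^ ((0:ℤ) - 1) - I ^ (1 - (0:ℤ))) * x + algebraMap ℂ A (c 0) = _
    rw [m00, m01, hc0, map_zero, map_neg]; ring
  have hB1 : B 1 = algebraMap ℂ A (2 * I) * M := by
    show algebraMap ℂ A (I ^ (1:ℤ) - I ^ (-(1:ℤ))) * M -
        algebraMap ℂ A (I ^ ((1:ℤ) - 1) - I ^ (1 - (1:ℤ))) * x + algebraMap ℂ A (c 1) = _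
    rw [m10, m11, hc1, map_zero]; ring
  have hB2 : B 2 = algebraMap ℂ A (2 * I) * (1 - x) := by
    show algebraMap ℂ A (I ^ (2:ℤ) - I ^ (-(2:ℤ))) * M -
        algebraMap ℂ A (I ^ ((2:ℤ) - 1) - I ^ (1 - (2:ℤ))) * x + algebraMap ℂ A (c 2) = _
    rw [m20, m21, hc2, map_zero, mul_sub, mul_one]; ring
  have hB3 : B 3 = algebraMap ℂ A (2 * I) * (1 - M) := by
    show algebraMap ℂ A (I ^ (3:ℤ) - I ^ (-(3:ℤ))) * M -
        algebraMap ℂ A (I ^ ((3:ℤ) - 1) - I ^ (1 - (3:ℤ))) * x + algebraMap ℂ A (c 3) = _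
    rw [m30, m31, hc3, map_zero, map_neg, mul_sub, mul_one]; ring
  have h16 : (algebraMap ℂ A (2 * I)) ^ 4 = 16 := by
    rw [← map_pow, show ((2 * I) ^ 4 : ℂ) = 16 by
      rw [hIdef]; linear_combination (16 * Complex.I ^ 2 - 16) * Complex.I_sq]
    rw [map_ofNat]
  calc B 0 * B 1 * B 2 * B 3
      = (algebraMap ℂ A (2 * I)) ^ 4 * (x * M * (1 - x) * (1 - M)) := by
        rw [hB0, hB1, hB2, hB3]; ring
    _ = 16 * (1 - x) * F := by rw [h16]; show _ = _ * (x * M * (1 - M)); ring
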